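/- arXiv:2506.10368 — 2 statements merged into one kernel-verified Lean document; each statement's English description precedes it below -/
import Mathlib

section
/- Let (Q,𝔫) be a regular local ring of dimension c ≥ 2 with algebraically closed residue field k = Q/𝔫, let f₁,…,f_c ∈ 𝔫² be a Q-regular sequence, and set A = Q/(f₁,…,f_c), so that A is an Artinian local complete intersection of complexity c. Assume ℓ(A) is even. Assume there exists a finitely generated indecomposable A-module H with no nonzero free direct summand, an odd integer μ equal to the minimal number of generators of H, and a short exact sequence of A-modules 0 → H → A^μ → H → 0 (i.e., Ω_A(H) ≅ H). Then there exists an integer m ≥ 2 (depending only on A) such that m divides ℓ(M) for every finitely generated A-module M satisfying Tor_i^A(H, M) = 0 for all i ≥ 1. -/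
open CategoryTheory

/-- The length of a module: the Krull dimension of its lattice of submodules,
i.e. the supremum of lengths of chains of submodules. -/
noncomputable def moduleLength (R M : Type*) [Ring R] [AddCommGroup M] [Module R M] : ℕ∞ :=
  WithBot.unbotD 0 (Order.krullDim (Submodule R M))

section Length

variable {R : Type*} [Ring R]

open Order

lemma moduleLength_eq_height (M : Type*) [AddCommGroup M] [Module R M] :
    moduleLength R M = Order.height (⊤ : Submodule R M) := by
  have h1 : Order.krullDim (Submodule R M) = ((⨆ a : Submodule R M, Order.height a : ℕ∞) : WithBot ℕ∞) :=
    krullDim_eq_iSup_height_of_nonempty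
  have h2 : (⨆ a : Submodule R M, Order.height a) = Order.height (⊤ : Submodule R M) :=
    le_antisymm (iSup_le fun a => height_mono le_top) (le_iSup _ _)
  rw [moduleLength, h1, h2, WithBot.unbotD_coe]

lemma moduleLength_congr {M N : Type*} [AddCommGroup M] [Module R M] [AddCommGroup N]
    [Module R N] (e : M ≃ₗ[R] N) : moduleLength R M = moduleLength R N := by
  rw [moduleLength, moduleLength, Order.krullDim_eq_of_orderIso (Submodule.orderIsoMapComap e)]

lemma moduleLength_of_subsingleton {M : Type*} [AddCommGroup M] [Module R M] [Subsingleton M] :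
    moduleLength R M = 0 := by
  rw [moduleLength_eq_height]
  simp only [Order.height_eq_zero]
  intro x _
  exact le_of_eq (Subsingleton.elim _ _)

lemma height_succ_le' {α : Type*} [Preorder α] {x y : α} (h : x < y) :
    Order.height x + 1 ≤ Order.height y := by
  rw [Order.height_eq_iSup_lt_height y]
  exact le_iSup₂_of_le x h le_rfl

/-- key chain bound in products -/
lemma ltseries_length_le {α β : Type*} [PartialOrder α] [PartialOrder β]
    (s : LTSeries (α × β)) :
    (s.length : ℕ∞) ≤ Order.height s.last.1 + Order.height s.last.2 := by
  suffices H : ∀ (n : ℕ) (s : LTSeries (α × β)), s.length = n →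
      (s.length : ℕ∞) ≤ Order.height s.last.1 + Order.height s.last.2 from H _ s rfl
  intro n
  induction n with
  | zero => intro s hn; simp [hn]
  | succ n ih =>
    intro s hn
    have hlen : s.length ≠ 0 := by omega
    have hlt : s.eraseLast.last < s.last := s.eraseLast_last_rel_last hlen
    have hlen' : s.eraseLast.length = n := by
      simp [RelSeries.eraseLast, hn]
    have IH := ih s.eraseLast hlen'
    have key : (Order.height s.eraseLast.last.1 + Order.height s.eraseLast.last.2) + 1 ≤
        Order.height s.last.1 + Order.height s.last.2 := by
      rcases Prod.lt_iff.1 hlt with ⟨h1, h2⟩ | ⟨h1, h2⟩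
      · have := height_succ_le' h1
        calc (Order.height s.eraseLast.last.1 + Order.height s.eraseLast.last.2) + 1
            = (Order.height s.eraseLast.last.1 + 1) + Order.height s.eraseLast.last.2 := by
              ring
          _ ≤ Order.height s.last.1 + Order.height s.last.2 :=
              add_le_add this (Order.height_mono h2)
      · have := height_succ_le' h2
        calc (Order.height s.eraseLast.last.1 + Order.height s.eraseLast.last.2) + 1
            = Order.height s.eraseLast.last.1 + (Order.height s.eraseLast.last.2 + 1) := by
              ring
          _ ≤ Order.height s.last.1 + Order.height s.last.2 :=
              add_le_add (Order.height_mono h1) this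
    rw [hn]
    rw [hlen'] at IH
    push_cast
    calc ((n : ℕ∞) + 1 : ℕ∞) ≤ (Order.height s.eraseLast.last.1 + Order.height s.eraseLast.last.2) + 1 := by
          exact add_le_add_left IH 1
      _ ≤ _ := key

end Length

section Add
variable {R : Type*} [Ring R]
open Order

lemma enat_add_le_of_forall {s t u : ℕ∞}
    (h : ∀ m n : ℕ, (m : ℕ∞) ≤ s → (n : ℕ∞) ≤ t → ((m + n : ℕ) : ℕ∞) ≤ u) : s + t ≤ u := by
  have htop : ∀ v : ℕ∞, (∀ k : ℕ, (k : ℕ∞) ≤ v) → v = ⊤ := by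
    intro v hv
    by_contra hne
    lift v to ℕ using hne
    have := hv (v + 1)
    exact absurd (by exact_mod_cast this) (by omega)
  rcases eq_or_ne s ⊤ with rfl | hs
  · have : u = ⊤ := htop u fun k => by
      simpa using h k 0 le_top (by simp)
    simp [this]
  rcases eq_or_ne t ⊤ with rfl | ht
  · have : u = ⊤ := htop u fun k => by
      simpa using h 0 k (by simp) le_top
    simp [this]
  lift s to ℕ using hs
  lift t to ℕ using ht
  have := h s t le_rfl le_rfl
  exact_mod_cast this

lemma moduleLength_submodule_add {P : Type*} [AddCommGroup P] [Module R P]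
    (p : Submodule R P) :
    moduleLength R P = moduleLength R p + moduleLength R (P ⧸ p) := by
  rw [moduleLength_eq_height, moduleLength_eq_height, moduleLength_eq_height]
  apply le_antisymm
  · -- upper bound
    apply Order.height_le
    intro s hs
    set t : LTSeries (Submodule R p × Submodule R (P ⧸ p)) :=
      LTSeries.map s _ (Submodule.strictMono_comap_prod_map p) with ht
    have hlen : t.length = s.length := rfl
    have hb := ltseries_length_le t
    rw [hlen] at hb
    refine hb.trans (add_le_add ?_ ?_) <;> exact Order.height_mono le_top
  · -- lower bound
    apply enat_add_le_of_forall
    intro m n hm hn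
    obtain ⟨c1, hc1last, hc1len⟩ := Order.exists_series_of_le_height _ hm
    obtain ⟨c2, hc2last, hc2len⟩ := Order.exists_series_of_le_height _ hn
    have f1strict : StrictMono (Submodule.map p.subtype) :=
      Submodule.map_strictMono_of_injective (Submodule.injective_subtype p)
    have f2strict : StrictMono (Submodule.comap p.mkQ) :=
      Submodule.comap_strictMono_of_surjective (Submodule.mkQ_surjective p)
    set d1 : LTSeries (Submodule R P) := c1.map _ f1strict with hd1
    rcases Nat.eq_zero_or_pos n with rfl | hn0
    · -- just use d1
      have : (d1.length : ℕ∞) ≤ Order.height (⊤ : Submodule R P) :=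
        Order.length_le_height le_top
      simpa [hd1, hc1len] using this
    · have hc2len0 : c2.length ≠ 0 := by omega
      set c2t : LTSeries (Submodule R (P ⧸ p)) := c2.tail hc2len0 with hc2t
      set d2 : LTSeries (Submodule R P) := LTSeries.map c2t _ f2strict with hd2
      have hconnect : d1.last < d2.head := by
        have h1 : d1.last = Submodule.map p.subtype ⊤ := by
          rw [hd1, LTSeries.last_map, hc1last]
        have h2 : d2.head = Submodule.comap p.mkQ (c2 ⟨1, by omega⟩) := by
          rw [hd2, LTSeries.head_map, hc2t, RelSeries.head_tail]
          have hone : (1 : Fin (c2.length + 1)) = ⟨1, by omega⟩ := by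
            apply Fin.ext
            simp [Fin.val_one']
            omega
          rw [hone]
        rw [h1, h2, Submodule.map_subtype_top]
        have hbot : (⊥ : Submodule R (P ⧸ p)) < c2 ⟨1, by omega⟩ :=
          lt_of_le_of_lt bot_le (c2.strictMono (by
            show (0 : Fin (c2.length + 1)) < ⟨1, by omega⟩
            simp [Fin.lt_def]))
        have := f2strict hbot
        simpa [Submodule.comap_bot, Submodule.ker_mkQ] using this
      set d : LTSeries (Submodule R P) := d1.append d2 hconnect with hd
      have hdlen : d.length = m + n := by
        have h0 : d.length = d1.length + d2.length + 1 := rfl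
        have h1 : d1.length = m := hc1len
        have h2 : d2.length = n - 1 := by
          show c2t.length = n - 1
          rw [hc2t]
          show c2.length - 1 = n - 1
          rw [hc2len]
        rw [h0, h1, h2]
        omega
      have : (d.length : ℕ∞) ≤ Order.height (⊤ : Submodule R P) :=
        Order.length_le_height le_top
      rw [hdlen] at this
      exact this

end Add

section SES
variable {R : Type*} [Ring R]

lemma moduleLength_add_of_exact {N P Q : Type*}
    [AddCommGroup N] [Module R N] [AddCommGroup P] [Module R P] [AddCommGroup Q] [Module R Q]
    (f : N →ₗ[R] P) (g : P →ₗ[R] Q) (hf : Function.Injective f) (hg : Function.Surjective g)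
    (hexact : Function.Exact f g) :
    moduleLength R P = moduleLength R N + moduleLength R Q := by
  rw [moduleLength_submodule_add (LinearMap.range f)]
  congr 1
  · exact (moduleLength_congr (LinearEquiv.ofInjective f hf)).symm
  · have hker : LinearMap.range f = LinearMap.ker g := hexact.linearMap_ker_eq.symm
    rw [hker]
    exact moduleLength_congr (g.quotKerEquivOfSurjective hg)

lemma moduleLength_pi (M : Type*) [AddCommGroup M] [Module R M] (n : ℕ) :
    moduleLength R (Fin n → M) = n * moduleLength R M := by
  induction n with
  | zero =>
    have : Subsingleton (Fin 0 → M) := ⟨fun f g => funext fun i => i.elim0⟩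
    rw [moduleLength_of_subsingleton]
    simp
  | succ n ih =>
    classical
    have hexact : Function.Exact
        (LinearMap.single R (fun _ : Fin (n+1) => M) 0)
        (LinearMap.funLeft R M (Fin.succ : Fin n → Fin (n+1))) := by
      intro v
      constructor
      · intro hv
        refine ⟨v 0, funext fun i => ?_⟩
        have hv' : ∀ i : Fin n, v i.succ = 0 := fun i => congrFun hv i
        rcases Fin.eq_zero_or_eq_succ i with rfl | ⟨j, rfl⟩
        · simp [LinearMap.single_apply]
        · simp [LinearMap.single, Pi.single, Function.update,
            (Fin.succ_ne_zero j)]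
          exact (hv' j).symm
      · rintro ⟨m, rfl⟩
        funext i
        simp only [LinearMap.funLeft_apply, LinearMap.single_apply, Pi.zero_apply,
          Function.comp_apply]
        exact Pi.single_eq_of_ne (Fin.succ_ne_zero i) m
    have hinj : Function.Injective (LinearMap.single R (fun _ : Fin (n+1) => M) 0) := by
      intro a b hab
      have := congrFun hab 0
      simpa using this
    have hsurj : Function.Surjective (LinearMap.funLeft R M (Fin.succ : Fin n → Fin (n+1))) := by
      intro w
      exact ⟨Fin.cons 0 w, funext fun i => by simp [LinearMap.funLeft]⟩
    rw [moduleLength_add_of_exact _ _ hinj hsurj hexact, ih]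
    push_cast
    ring

end SES

section Chase
open LinearMap
variable {A : Type*} [CommRing A]

lemma tensor_inj_of_tor_vanish
    {H F' G0 G1 G2 M : Type*}
    [AddCommGroup H] [Module A H] [AddCommGroup F'] [Module A F']
    [AddCommGroup G0] [Module A G0] [AddCommGroup G1] [Module A G1]
    [AddCommGroup G2] [Module A G2] [AddCommGroup M] [Module A M]
    [Module.Flat A G0] [Module.Flat A G1]
    (ι : H →ₗ[A] F') (π : F' →ₗ[A] H)
    (hιinj : Function.Injective ι) (hexHF : Function.Exact ι π)
    (hπsurj : Function.Surjective π)
    (g2 : G2 →ₗ[A] G1) (g1 : G1 →ₗ[A] G0) (p : G0 →ₗ[A] M)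
    (hg : Function.Exact g1 p) (hp : Function.Surjective p)
    (hgg : g1 ∘ₗ g2 = 0)
    (hTor : Function.Exact (lTensor H g2) (lTensor H g1)) :
    Function.Injective (rTensor M ι) := by
  rw [← LinearMap.ker_eq_bot]
  rw [LinearMap.ker_eq_bot']
  intro x hx
  -- step 1: lift x to y in H ⊗ G0
  obtain ⟨y, rfl⟩ := LinearMap.lTensor_surjective H hp x
  -- step 2
  have hcomm1 : rTensor M ι ∘ₗ lTensor H p = lTensor F' p ∘ₗ rTensor G0 ι := by
    rw [LinearMap.rTensor_comp_lTensor, LinearMap.lTensor_comp_rTensor]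
  have h2 : lTensor F' p (rTensor G0 ι y) = 0 := by
    have := congrArg (fun φ => φ y) hcomm1
    simp only [LinearMap.comp_apply] at this
    rw [← this, hx]
  -- step 3
  have hex3 : Function.Exact (lTensor F' g1) (lTensor F' p) := lTensor_exact F' hg hp
  obtain ⟨z, hz⟩ := (hex3 _).1 h2
  -- step 4
  have hcomm2 : lTensor H g1 ∘ₗ rTensor G1 π = rTensor G0 π ∘ₗ lTensor F' g1 := by
    rw [LinearMap.rTensor_comp_lTensor, LinearMap.lTensor_comp_rTensor]
  have hπι : π ∘ₗ ι = 0 := by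
    ext h; exact hexHF.apply_apply_eq_zero h
  have h4 : lTensor H g1 (rTensor G1 π z) = 0 := by
    have := congrArg (fun φ => φ z) hcomm2
    simp only [LinearMap.comp_apply] at this
    rw [this, hz]
    have : rTensor G0 π ∘ₗ rTensor G0 ι = 0 := by
      rw [← LinearMap.rTensor_comp, hπι, LinearMap.rTensor_zero]
    have := congrArg (fun φ => φ y) this
    simpa only [LinearMap.comp_apply, LinearMap.zero_apply] using this
  -- step 5
  obtain ⟨w, hw⟩ := (hTor _).1 h4
  -- step 6
  obtain ⟨v, hv⟩ := LinearMap.rTensor_surjective G2 hπsurj w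
  -- step 7
  set z' := z - lTensor F' g2 v with hz'
  have h7 : rTensor G1 π z' = 0 := by
    have hcomm3 : rTensor G1 π ∘ₗ lTensor F' g2 = lTensor H g2 ∘ₗ rTensor G2 π := by
      rw [LinearMap.rTensor_comp_lTensor, LinearMap.lTensor_comp_rTensor]
    have := congrArg (fun φ => φ v) hcomm3
    simp only [LinearMap.comp_apply] at this
    rw [hz', map_sub, this, hv, hw, sub_self]
  -- step 8
  have hex8 : Function.Exact (rTensor G1 ι) (rTensor G1 π) := rTensor_exact G1 hexHF hπsurj
  obtain ⟨u, hu⟩ := (hex8 _).1 h7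
  -- step 9
  have h9 : lTensor F' g1 z' = rTensor G0 ι y := by
    have : lTensor F' g1 (lTensor F' g2 v) = 0 := by
      rw [← LinearMap.comp_apply, ← LinearMap.lTensor_comp, hgg, LinearMap.lTensor_zero,
        LinearMap.zero_apply]
    rw [hz', map_sub, this, sub_zero, hz]
  -- step 10
  have hcomm4 : lTensor F' g1 ∘ₗ rTensor G1 ι = rTensor G0 ι ∘ₗ lTensor H g1 := by
    rw [LinearMap.rTensor_comp_lTensor, LinearMap.lTensor_comp_rTensor]
  have h10 : rTensor G0 ι (lTensor H g1 u) = rTensor G0 ι y := by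
    have := congrArg (fun φ => φ u) hcomm4
    simp only [LinearMap.comp_apply] at this
    rw [← this, hu, h9]
  have hinj10 : Function.Injective (rTensor G0 ι) :=
    Module.Flat.rTensor_preserves_injective_linearMap ι hιinj
  have h10' : lTensor H g1 u = y := hinj10 h10
  -- step 11
  have hpg : p ∘ₗ g1 = 0 := by
    ext a; exact hg.apply_apply_eq_zero a
  rw [← h10', ← LinearMap.comp_apply, ← LinearMap.lTensor_comp, hpg, LinearMap.lTensor_zero,
    LinearMap.zero_apply]

end Chase

section TorPart
open CategoryTheory

lemma tor_vanish_presentation (A : Type) [CommRing A] (H M : Type)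
    [AddCommGroup H] [Module A H] [AddCommGroup M] [Module A M]
    (hsub : Subsingleton
      (((CategoryTheory.Tor (ModuleCat A) 1).obj (ModuleCat.of A H)).obj (ModuleCat.of A M))) :
    ∃ (G0 G1 G2 : ModuleCat.{0} A) (g2 : G2 →ₗ[A] G1) (g1 : G1 →ₗ[A] G0)
      (p : (G0 : Type) →ₗ[A] M),
      Module.Flat A G0 ∧ Module.Flat A G1 ∧
      Function.Exact g1 p ∧ Function.Surjective p ∧ g1 ∘ₗ g2 = 0 ∧
      Function.Exact (LinearMap.lTensor H g2) (LinearMap.lTensor H g1) := by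
  obtain ⟨P⟩ : Nonempty (ProjectiveResolution (ModuleCat.of A M)) := HasProjectiveResolution.out
  set F := (MonoidalCategory.tensoringLeft (ModuleCat A)).obj (ModuleCat.of A H) with hF
  refine ⟨P.complex.X 0, P.complex.X 1, P.complex.X 2,
    (P.complex.d 2 1).hom, (P.complex.d 1 0).hom, (P.π.f 0).hom, ?_, ?_, ?_, ?_, ?_, ?_⟩
  · exact (by haveI := (IsProjective.iff_projective (P.complex.X 0)).2 (P.projective 0); exact Module.Flat.of_projective)
  · exact (by haveI := (IsProjective.iff_projective (P.complex.X 1)).2 (P.projective 1); exact Module.Flat.of_projective)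
  · -- Exact d10 π0
    have hcolim := P.isColimitCokernelCofork
    have hex : (ShortComplex.mk (P.complex.d 1 0) (P.π.f 0) P.complex_d_comp_π_f_zero).Exact :=
      ShortComplex.exact_of_g_is_cokernel _ hcolim
    exact (ShortComplex.ShortExact.moduleCat_exact_iff_function_exact _).1 hex
  · -- surjective
    exact (ModuleCat.epi_iff_surjective (P.π.f 0)).1 inferInstance
  · -- d10 ∘ d21 = 0
    have := P.complex.d_comp_d 2 1 0
    ext a
    exact congrArg (fun φ => φ a) this
  · -- Tor exactness
    have hzero : Limits.IsZero ((F.leftDerived 1).obj (ModuleCat.of A M)) :=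
      @ModuleCat.isZero_of_subsingleton _ _ _ hsub
    have hzero2 : Limits.IsZero
        (((F.mapHomologicalComplex (ComplexShape.down ℕ)).obj P.complex).homology 1) :=
      Limits.IsZero.of_iso hzero (P.isoLeftDerivedObj F 1).symm
    have hexact1 : ((F.mapHomologicalComplex (ComplexShape.down ℕ)).obj P.complex).ExactAt 1 :=
      (HomologicalComplex.exactAt_iff_isZero_homology _ _).2 hzero2
    have hsc := (HomologicalComplex.exactAt_iff' _ 2 1 0 (by simp) (by simp)).1 hexact1
    have hfe := (ShortComplex.ShortExact.moduleCat_exact_iff_function_exact _).1 hsc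
    exact hfe

end TorPart

/-- `Q` is a regular local ring of dimension `c ≥ 2` (Noetherian local,
Krull dimension `c`, maximal ideal generated by `c` elements) with algebraically closed
residue field; `f : Fin c → Q` is a regular sequence inside `𝔫²`, and `A = Q/(f₁,…,f_c)`
(presented as a surjection `q : Q →+* A` with kernel `(f₁,…,f_c)`).  Assume `ℓ(A)` is even,
and that `H` is a nonzero finitely generated indecomposable `A`-module with no nonzero free
direct summand, whose minimal number of generators `μ` is odd, together with a short exact
sequence `0 → H → A^μ → H → 0`.  Then there is `m ≥ 2` dividing `ℓ(M)` for every finitely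
generated `A`-module `M` with `Tor_i^A(H, M) = 0` for all `i ≥ 1`. -/
theorem stmt_0
    (Q : Type) [CommRing Q] [IsLocalRing Q] [IsNoetherianRing Q]
    [IsAlgClosed (IsLocalRing.ResidueField Q)]
    (c : ℕ) (hc : 2 ≤ c)
    (hdim : ringKrullDim Q = c)
    (hregular : ∃ s : Finset Q, s.card = c ∧
      Ideal.span (s : Set Q) = IsLocalRing.maximalIdeal Q)
    (f : Fin c → Q)
    (hf2 : ∀ i, f i ∈ IsLocalRing.maximalIdeal Q ^ 2)
    (hfreg : RingTheory.Sequence.IsRegular Q (List.ofFn f))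
    (A : Type) [CommRing A]
    (q : Q →+* A) (hq : Function.Surjective q)
    (hker : RingHom.ker q = Ideal.span (Set.range f))
    (heven : Even (moduleLength A A))
    (H : Type) [AddCommGroup H] [Module A H] [Module.Finite A H] [Nontrivial H]
    (hindec : ∀ (U V : Type) [AddCommGroup U] [Module A U] [AddCommGroup V] [Module A V],
      (H ≃ₗ[A] U × V) → (Subsingleton U ∨ Subsingleton V))
    (hnofree : ∀ (V : Type) [AddCommGroup V] [Module A V], IsEmpty (H ≃ₗ[A] (A × V)))
    (μ : ℕ) (hodd : Odd μ)
    (hμ : IsLeast {n : ℕ | ∃ p : (Fin n → A) →ₗ[A] H, Function.Surjective p} μ)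
    (hses : ∃ (ι : H →ₗ[A] (Fin μ → A)) (π : (Fin μ → A) →ₗ[A] H),
      Function.Injective ι ∧ Function.Exact ι π ∧ Function.Surjective π) :
    ∃ m : ℕ, 2 ≤ m ∧
      ∀ (M : Type) [AddCommGroup M] [Module A M] [Module.Finite A M],
        (∀ i : ℕ, 1 ≤ i →
          Subsingleton
            (((Tor (ModuleCat A) i).obj (ModuleCat.of A H)).obj (ModuleCat.of A M))) →
        (m : ℕ∞) ∣ moduleLength A M := by
  classical
  obtain ⟨ι, π, hιinj, hexact, hπsurj⟩ := hses
  refine ⟨2, le_rfl, ?_⟩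
  intro M _ _ _ hTor
  obtain ⟨G0, G1, G2, g2, g1, p, hflat0, hflat1, hg, hp, hgg, htor⟩ :=
    tor_vanish_presentation A H M (hTor 1 le_rfl)
  have hinj : Function.Injective (LinearMap.rTensor M ι) := by
    exact tensor_inj_of_tor_vanish (G0 := G0) (G1 := G1) (G2 := G2)
      ι π hιinj hexact hπsurj g2 g1 p hg hp hgg htor
  have hmid : Function.Exact (LinearMap.rTensor M ι) (LinearMap.rTensor M π) :=
    rTensor_exact M hexact hπsurj
  have hsurj : Function.Surjective (LinearMap.rTensor M π) :=
    LinearMap.rTensor_surjective M hπsurj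
  have hlen : moduleLength A (TensorProduct A (Fin μ → A) M)
      = moduleLength A (TensorProduct A H M) + moduleLength A (TensorProduct A H M) :=
    moduleLength_add_of_exact _ _ hinj hsurj hmid
  have e : TensorProduct A (Fin μ → A) M ≃ₗ[A] (Fin μ → M) :=
    (TensorProduct.comm A _ _).trans (TensorProduct.piScalarRight A A M (Fin μ))
  have hlen2 : moduleLength A (TensorProduct A (Fin μ → A) M)
      = (μ : ℕ∞) * moduleLength A M := by
    rw [moduleLength_congr e, moduleLength_pi]
  set L := moduleLength A M with hL
  set x := moduleLength A (TensorProduct A H M) with hx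
  have key : (μ : ℕ∞) * L = x + x := by rw [← hlen2, hlen]
  rcases eq_or_ne L ⊤ with hLtop | hLfin
  · rw [hLtop]
    exact ⟨⊤, by
      rw [ENat.mul_top]
      exact (by norm_num : ((2:ℕ):ℕ∞) ≠ 0)⟩
  · lift L to ℕ using hLfin with L0
    have hfin : ((μ : ℕ∞) * (L0 : ℕ∞)) ≠ ⊤ := by
      exact_mod_cast (by exact_mod_cast WithTop.natCast_ne_top (μ * L0) : ((μ * L0 : ℕ) : ℕ∞) ≠ ⊤)
    have hxfin : x ≠ ⊤ := by
      intro hxt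
      rw [hxt] at key
      simp at key
      exact hfin (by rw [key])
    lift x to ℕ using hxfin with x0
    have keyN : μ * L0 = x0 + x0 := by exact_mod_cast key
    have h2 : 2 ∣ μ * L0 := ⟨x0, by omega⟩
    have := (Nat.Prime.dvd_mul Nat.prime_two).1 h2
    have hL2 : 2 ∣ L0 := by
      rcases this with h | h
      · exact absurd (even_iff_two_dvd.2 h) (Nat.not_even_iff_odd.2 hodd)
      · exact h
    obtain ⟨k, rfl⟩ := hL2
    exact ⟨(k : ℕ∞), by push_cast; ring⟩
end

section
/- Let (Q,𝔫) be a regular local ring of dimension c ≥ 2 with algebraically closed residue field k = Q/𝔫, let f₁,…,f_{c-1}, g be a Q-regular sequence with f_i ∈ 𝔫² and g ∈ 𝔫, and set A = Q/(f₁,…,f_{c-1}, g^r) with r ≥ 2. Then for every 1 ≤ s ≤ r−1 and every l ≥ 0, Tor_l^A(A/(g^s A), k) is a one-dimensional k-vector space, i.e., all Betti numbers of the A-module A/(g^s A) are equal to 1. -/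
open CategoryTheory

section Auxiliary

open Limits MonoidalCategory HomologicalComplex

/-! ### Module length lemmas -/

lemma Stmt14.krullDim_simpleOrder {α : Type*} [PartialOrder α] [BoundedOrder α]
    [IsSimpleOrder α] : Order.krullDim α = 1 := by
  apply le_antisymm
  · apply iSup_le
    intro p
    show (p.length : WithBot ℕ∞) ≤ (1 : ℕ)
    rw [Nat.cast_le (α := WithBot ℕ∞)]
    by_contra h
    push_neg at h
    have h2 : 2 ≤ p.length := h
    have h01 : p.toFun ⟨0, by omega⟩ < p.toFun ⟨1, by omega⟩ :=
      p.strictMono (show (⟨0, by omega⟩ : Fin (p.length+1)) < ⟨1, by omega⟩ by simp [Fin.lt_def])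
    have h12 : p.toFun ⟨1, by omega⟩ < p.toFun ⟨2, by omega⟩ :=
      p.strictMono (show (⟨1, by omega⟩ : Fin (p.length+1)) < ⟨2, by omega⟩ by simp [Fin.lt_def])
    rcases IsSimpleOrder.eq_bot_or_eq_top (p.toFun ⟨1, by omega⟩) with h1 | h1
    · rw [h1] at h01; exact not_lt_bot h01
    · rw [h1] at h12; exact not_top_lt h12
  · have h1 : (1 : WithBot ℕ∞) =
        (((RelSeries.singleton {(a, b) : α × α | a < b} (⊥ : α)).snoc ⊤ bot_lt_top).length : ℕ) := rfl
    rw [h1, Order.krullDim]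
    exact le_iSup (fun p : LTSeries α => (p.length : WithBot ℕ∞)) _

lemma Stmt14.moduleLength_eq_one_of_simple (R M : Type*) [Ring R] [AddCommGroup M] [Module R M]
    [IsSimpleModule R M] : moduleLength R M = 1 := by
  rw [moduleLength, Stmt14.krullDim_simpleOrder]; rfl

lemma Stmt14.moduleLength_eq_of_equiv (R M N : Type*) [Ring R] [AddCommGroup M] [Module R M]
    [AddCommGroup N] [Module R N] (e : M ≃ₗ[R] N) : moduleLength R M = moduleLength R N := by
  rw [moduleLength, moduleLength, Order.krullDim_eq_of_orderIso (Submodule.orderIsoMapComap e)]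

lemma Stmt14.moduleLength_quot_maximal (R : Type*) [CommRing R] (I : Ideal R)
    (h : I.IsMaximal) : moduleLength R (R ⧸ I) = 1 := by
  have : IsSimpleModule R (R ⧸ I) := by
    rw [isSimpleModule_iff_isCoatom]
    exact Ideal.isMaximal_def.mp h
  exact Stmt14.moduleLength_eq_one_of_simple R _

lemma Stmt14.moduleLength_eq_of_iso {A : Type} [CommRing A] {X Y : ModuleCat A} (e : X ≅ Y) :
    moduleLength A X = moduleLength A Y :=
  Stmt14.moduleLength_eq_of_equiv A X Y e.toLinearEquiv

/-! ### The annihilator lemma -/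

lemma Stmt14.ann_lemma {Q A : Type} [CommRing Q] [CommRing A] (q : Q →+* A)
    (hq : Function.Surjective q) {ι : Type} (f : ι → Q) (g : Q) (r t : ℕ)
    (ht2 : t ≤ r)
    (hker : RingHom.ker q = Ideal.span (insert (g ^ r) (Set.range f)))
    (hreg : IsSMulRegular (Q ⧸ (Ideal.span (Set.range f) • ⊤ : Submodule Q Q)) g)
    (x : A) (hx : x * (q g) ^ t = 0) : x ∈ Ideal.span {(q g) ^ (r - t)} := by
  obtain ⟨y, rfl⟩ := hq x
  have hy : y * g ^ t ∈ RingHom.ker q := by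
    rw [RingHom.mem_ker, map_mul, map_pow]; exact hx
  rw [hker, Ideal.span_insert] at hy
  obtain ⟨u, hu, v, hv, huv⟩ := Submodule.mem_sup.mp hy
  obtain ⟨w, hw⟩ := Ideal.mem_span_singleton'.mp hu
  have key : g ^ t * (y - w * g ^ (r - t)) ∈ Ideal.span (Set.range f) := by
    have hgr : g ^ t * g ^ (r - t) = g ^ r := by
      rw [← pow_add]; congr 1; omega
    have h2 : u + v = y * g ^ t := huv
    rw [← hw] at h2
    have : g ^ t * (y - w * g ^ (r - t)) = v := by
      linear_combination (-1 : Q) * h2 - w * hgr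
    rw [this]; exact hv
  have hmem : y - w * g ^ (r - t) ∈ Ideal.span (Set.range f) := by
    have hF : (Ideal.span (Set.range f) • ⊤ : Submodule Q Q) = Ideal.span (Set.range f) := by
      rw [smul_eq_mul, Ideal.mul_top]
    have hpow : IsSMulRegular (Q ⧸ (Ideal.span (Set.range f) • ⊤ : Submodule Q Q)) (g ^ t) :=
      hreg.pow t
    have h0 : (g ^ t) • (Submodule.Quotient.mk (y - w * g ^ (r - t)) :
        Q ⧸ (Ideal.span (Set.range f) • ⊤ : Submodule Q Q)) = 0 := by
      rw [← Submodule.Quotient.mk_smul, Submodule.Quotient.mk_eq_zero, hF]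
      simpa [smul_eq_mul] using key
    have h0' : (g ^ t) • (Submodule.Quotient.mk (y - w * g ^ (r - t)) :
        Q ⧸ (Ideal.span (Set.range f) • ⊤ : Submodule Q Q)) =
        (g ^ t) • (0 : Q ⧸ (Ideal.span (Set.range f) • ⊤ : Submodule Q Q)) := by
      rw [h0, smul_zero]
    have := hpow h0'
    rw [← hF]
    exact (Submodule.Quotient.mk_eq_zero _).mp this
  have hFker : Ideal.span (Set.range f) ≤ RingHom.ker q := by
    rw [hker]
    exact Ideal.span_mono (Set.subset_insert _ _)
  have : q (y - w * g ^ (r - t)) = 0 := hFker hmem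
  rw [map_sub, sub_eq_zero] at this
  rw [this, map_mul, map_pow]
  exact Ideal.mem_span_singleton'.mpr ⟨q w, rfl⟩

/-! ### Categorical lemmas -/

variable {A : Type} [CommRing A]

lemma Stmt14.flat_of_cat_projective (M : ModuleCat A) [Projective M] : Module.Flat A M := by
  have h : Projective (ModuleCat.of A M) := by rwa [ModuleCat.of_coe]
  have : Module.Projective A M := (IsProjective.iff_projective (M : Type _)).mpr h
  infer_instance

lemma Stmt14.smul_quot_eq_zero {I : Ideal A} {m : A} (hm : m ∈ I) (z : A ⧸ I) : m • z = 0 := by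
  obtain ⟨y, rfl⟩ := Submodule.Quotient.mk_surjective _ z
  rw [← Submodule.Quotient.mk_smul, Submodule.Quotient.mk_eq_zero]
  exact I.mul_mem_right y hm

/-- The degree-shifting isomorphism
`Tor_{l+1}(A/(a), k) ≅ Tor_l(A/(b), k)` coming from the short exact sequence
`0 → A/(b) → A → A/(a) → 0` (the first map being multiplication by `a`). -/
lemma Stmt14.tor_step (𝔪 : Ideal A) (a b : A) (hab : a * b = 0) (ha : a ∈ 𝔪)
    (hann : ∀ x, x * a = 0 → x ∈ Ideal.span {b}) (l : ℕ) :
    Nonempty ((((Tor (ModuleCat A) (l+1)).obj (ModuleCat.of A (A ⧸ Ideal.span {a}))).obj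
        (ModuleCat.of A (A ⧸ 𝔪))) ≅
      (((Tor (ModuleCat A) l).obj (ModuleCat.of A (A ⧸ Ideal.span {b}))).obj
        (ModuleCat.of A (A ⧸ 𝔪)))) := by
  classical
  let k : ModuleCat A := ModuleCat.of A (A ⧸ 𝔪)
  let P : ProjectiveResolution k := projectiveResolution k
  let X₁ : ModuleCat A := ModuleCat.of A (A ⧸ Ideal.span {b})
  let X₂ : ModuleCat A := ModuleCat.of A A
  let X₃ : ModuleCat A := ModuleCat.of A (A ⧸ Ideal.span {a})
  let f0 : A →ₗ[A] A := LinearMap.lsmul A A a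
  have hle : (Ideal.span {b} : Ideal A) ≤ LinearMap.ker f0 := by
    rw [Ideal.span_singleton_le_iff_mem, LinearMap.mem_ker]
    show a • b = 0
    rw [smul_eq_mul]; exact hab
  let fι : X₁ ⟶ X₂ := ModuleCat.ofHom (Submodule.liftQ (Ideal.span {b}) f0 hle)
  let gπ : X₂ ⟶ X₃ := ModuleCat.ofHom (Submodule.mkQ (Ideal.span {a}))
  have hfg : fι ≫ gπ = 0 := by
    apply ModuleCat.hom_ext
    apply LinearMap.ext
    intro x
    obtain ⟨y, rfl⟩ := Submodule.Quotient.mk_surjective _ x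
    show Submodule.mkQ (Ideal.span {a}) (f0 y) = 0
    rw [Submodule.mkQ_apply, Submodule.Quotient.mk_eq_zero]
    show a • y ∈ Ideal.span {a}
    rw [smul_eq_mul]
    exact Ideal.mul_mem_right y _ (Ideal.mem_span_singleton_self a)
  have hinj : Function.Injective fι := by
    rw [← LinearMap.ker_eq_bot]
    show LinearMap.ker (Submodule.liftQ (Ideal.span {b}) f0 hle) = ⊥
    apply Submodule.ker_liftQ_eq_bot
    intro x hx
    rw [LinearMap.mem_ker] at hx
    apply hann
    rw [mul_comm]
    exact hx
  have hsurj : Function.Surjective gπ := Submodule.mkQ_surjective (Ideal.span {a})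
  have hexact : Function.Exact fι gπ := by
    rw [LinearMap.exact_iff]
    show LinearMap.ker (Submodule.mkQ (Ideal.span {a}))
      = LinearMap.range (Submodule.liftQ (Ideal.span {b}) f0 hle)
    rw [Submodule.ker_mkQ, Submodule.range_liftQ]
    apply le_antisymm
    · intro z hz
      obtain ⟨c, hc⟩ := Ideal.mem_span_singleton'.mp hz
      exact ⟨c, by show a • c = z; rw [smul_eq_mul, mul_comm]; exact hc⟩
    · rintro z ⟨c, rfl⟩
      show a • c ∈ Ideal.span {a}
      rw [smul_eq_mul]
      exact Ideal.mul_mem_right c _ (Ideal.mem_span_singleton_self a)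
  let F : ModuleCat A → (ModuleCat A ⥤ ModuleCat A) :=
    fun X => (tensoringLeft (ModuleCat A)).obj X
  let CX : ModuleCat A → HomologicalComplex (ModuleCat A) (ComplexShape.down ℕ) :=
    fun X => ((F X).mapHomologicalComplex _).obj P.complex
  let Φf : CX X₁ ⟶ CX X₂ :=
    (NatTrans.mapHomologicalComplex ((tensoringLeft (ModuleCat A)).map fι) _).app P.complex
  let Φg : CX X₂ ⟶ CX X₃ :=
    (NatTrans.mapHomologicalComplex ((tensoringLeft (ModuleCat A)).map gπ) _).app P.complex
  have hΦf_f : ∀ i, Φf.f i = fι ▷ P.complex.X i := fun i => rfl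
  have hΦg_f : ∀ i, Φg.f i = gπ ▷ P.complex.X i := fun i => rfl
  have hΦzero : Φf ≫ Φg = 0 := by
    apply HomologicalComplex.hom_ext
    intro i
    show Φf.f i ≫ Φg.f i = 0
    rw [hΦf_f, hΦg_f]
    exact (comp_whiskerRight fι gπ _).symm.trans (by rw [hfg, MonoidalPreadditive.zero_whiskerRight]; rfl)
  let Sc : ShortComplex (HomologicalComplex (ModuleCat A) (ComplexShape.down ℕ)) :=
    ShortComplex.mk Φf Φg hΦzero
  have hSc : Sc.ShortExact := by
    rw [HomologicalComplex.shortExact_iff_degreewise_shortExact]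
    intro i
    haveI flat : Module.Flat A (P.complex.X i) := Stmt14.flat_of_cat_projective _
    have hmono : Mono (Φf.f i) := by
      rw [ModuleCat.mono_iff_injective]
      show Function.Injective (fι.hom.rTensor (P.complex.X i))
      exact Module.Flat.rTensor_preserves_injective_linearMap (M := P.complex.X i) fι.hom hinj
    have hepi : Epi (Φg.f i) := by
      rw [ModuleCat.epi_iff_surjective]
      show Function.Surjective (gπ.hom.rTensor (P.complex.X i))
      exact LinearMap.rTensor_surjective _ hsurj
    have hex : Function.Exact (fι.hom.rTensor (P.complex.X i)) (gπ.hom.rTensor (P.complex.X i)) :=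
      rTensor_exact (P.complex.X i) hexact hsurj
    exact { exact := by
              rw [ShortComplex.moduleCat_exact_iff]
              intro x hx
              exact (hex x).mp hx
            mono_f := hmono
            epi_g := hepi }
  let e : CX X₂ ≅ P.complex := HomologicalComplex.Hom.isoOfComponents
    (fun i => λ_ (P.complex.X i))
    (fun i j hij => (MonoidalCategory.leftUnitor_naturality (P.complex.d i j)).symm)
  have hzero2 : ∀ n : ℕ, IsZero ((CX X₂).homology (n+1)) := by
    intro n
    have h1 : IsZero (P.complex.homology (n+1)) :=
      (HomologicalComplex.exactAt_iff_isZero_homology _ _).mp (P.complex_exactAt_succ n)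
    exact IsZero.of_iso h1 ((homologyFunctor (ModuleCat A) (ComplexShape.down ℕ) (n+1)).mapIso e)
  have hγ : Φf ≫ e.hom ≫ P.π = 0 := by
    apply HomologicalComplex.hom_ext
    intro i
    match i with
    | 0 =>
      show (Φf ≫ e.hom ≫ P.π).f 0 = 0
      rw [← cancel_mono ((singleObjXSelf (ComplexShape.down ℕ) 0 k).hom)]
      rw [zero_comp]
      apply ModuleCat.hom_ext
      refine TensorProduct.ext' (fun x p => ?_)
      obtain ⟨y, rfl⟩ := Submodule.Quotient.mk_surjective _ x
      show (singleObjXSelf (ComplexShape.down ℕ) 0 k).hom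
        ((P.π.f 0) ((λ_ (P.complex.X 0)).hom ((fι ▷ P.complex.X 0)
          ((Submodule.Quotient.mk y) ⊗ₜ p)))) = 0
      have h1 : (fι ▷ P.complex.X 0) ((Submodule.Quotient.mk y : A ⧸ Ideal.span {b}) ⊗ₜ p)
          = (a • y) ⊗ₜ p := rfl
      rw [h1]
      have h2 : (λ_ (P.complex.X 0)).hom ((a • y : A) ⊗ₜ p) = (a • y : A) • p := rfl
      rw [h2, map_smul, map_smul]
      have : (a • y : A) ∈ 𝔪 := by rw [smul_eq_mul]; exact 𝔪.mul_mem_right y ha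
      exact Stmt14.smul_quot_eq_zero this _
    | (n+1) =>
      exact (HomologicalComplex.isZero_single_obj_X (ComplexShape.down ℕ) 0 k (n+1)
        (by simp)).eq_of_tgt _ _
  have hisoe : IsIso (homologyMap e.hom 0) := by
    change IsIso ((homologyFunctor (ModuleCat A) (ComplexShape.down ℕ) 0).map e.hom)
    infer_instance
  have hisoπ : IsIso (homologyMap P.π 0) :=
    (quasiIsoAt_iff_isIso_homologyMap P.π 0).mp inferInstance
  have hiso2 : IsIso (homologyMap (e.hom ≫ P.π) 0) := by
    rw [homologyMap_comp]
    exact IsIso.comp_isIso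
  have hmapzero : homologyMap Φf 0 = 0 := by
    have hc : homologyMap Φf 0 ≫ homologyMap (e.hom ≫ P.π) 0 = 0 := by
      rw [← homologyMap_comp, hγ, homologyMap_zero]
    exact (cancel_mono (homologyMap (e.hom ≫ P.π) 0)).mp (by rw [hc, zero_comp])
  have hrel : (ComplexShape.down ℕ).Rel (l+1) l := rfl
  have hmonoδ : Mono (hSc.δ (l+1) l hrel) := by
    apply (hSc.homology_exact₃ (l+1) l hrel).mono_g
    exact (hzero2 l).eq_of_src _ _
  have hepiδ : Epi (hSc.δ (l+1) l hrel) := by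
    apply (hSc.homology_exact₁ (l+1) l hrel).epi_f
    cases l with
    | zero => exact hmapzero
    | succ m => exact (hzero2 m).eq_of_tgt _ _
  have hisoδ : IsIso (hSc.δ (l+1) l hrel) := isIso_of_mono_of_epi _
  exact ⟨(P.isoLeftDerivedObj (F X₃) (l+1)) ≪≫ @asIso _ _ _ _ (hSc.δ (l+1) l hrel) hisoδ ≪≫
    (P.isoLeftDerivedObj (F X₁) l).symm⟩

noncomputable def Stmt14.quotQuotEquiv (J I : Ideal A) (hJI : J ≤ I) :
    ((A ⧸ J) ⧸ (I • ⊤ : Submodule A (A ⧸ J))) ≃ₗ[A] A ⧸ I := by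
  have h1 : (I • ⊤ : Submodule A (A ⧸ J)) = Submodule.map J.mkQ I := by
    have : (I • ⊤ : Submodule A (A ⧸ J)) = I • Submodule.map J.mkQ ⊤ := by
      rw [Submodule.map_top, Submodule.range_mkQ]
    rw [this, ← Submodule.map_smul'']
    congr 1
    rw [smul_eq_mul, Ideal.mul_top]
  exact (Submodule.quotEquivOfEq _ _ h1) ≪≫ₗ
    (Submodule.quotientQuotientEquivQuotientSup J I) ≪≫ₗ
    (Submodule.quotEquivOfEq _ _ (sup_eq_right.mpr hJI))

lemma Stmt14.tor_zero (𝔪 : Ideal A) (a : A) (ha : a ∈ 𝔪) :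
    Nonempty ((((Tor (ModuleCat A) 0).obj (ModuleCat.of A (A ⧸ Ideal.span {a}))).obj
        (ModuleCat.of A (A ⧸ 𝔪))) ≅ ModuleCat.of A (A ⧸ 𝔪)) := by
  let X : ModuleCat A := ModuleCat.of A (A ⧸ Ideal.span {a})
  let Fx : ModuleCat A ⥤ ModuleCat A := (tensoringLeft (ModuleCat A)).obj X
  haveI : PreservesFiniteColimits Fx :=
    inferInstanceAs (PreservesFiniteColimits (tensorLeft X))
  let i1 : (((Tor (ModuleCat A) 0).obj X).obj (ModuleCat.of A (A ⧸ 𝔪))) ≅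
      Fx.obj (ModuleCat.of A (A ⧸ 𝔪)) := Fx.leftDerivedZeroIsoSelf.app _
  have hJI : Ideal.span {a} ≤ 𝔪 := by
    rw [Ideal.span_singleton_le_iff_mem]; exact ha
  let e : (TensorProduct A (A ⧸ Ideal.span {a}) (A ⧸ 𝔪)) ≃ₗ[A] A ⧸ 𝔪 :=
    (TensorProduct.tensorQuotEquivQuotSMul (A ⧸ Ideal.span {a}) 𝔪) ≪≫ₗ
      Stmt14.quotQuotEquiv (Ideal.span {a}) 𝔪 hJI
  exact ⟨i1 ≪≫ e.toModuleIso⟩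

lemma Stmt14.tor_length (𝔪 : Ideal A) (hm : 𝔪.IsMaximal) (l : ℕ) :
    ∀ (a b : A), a * b = 0 → a ∈ 𝔪 → b ∈ 𝔪 →
    (∀ x, x * a = 0 → x ∈ Ideal.span {b}) → (∀ x, x * b = 0 → x ∈ Ideal.span {a}) →
    moduleLength A (((Tor (ModuleCat A) l).obj (ModuleCat.of A (A ⧸ Ideal.span {a}))).obj
        (ModuleCat.of A (A ⧸ 𝔪))) = 1 := by
  induction l with
  | zero =>
    intro a b hab ha hb h1 h2
    obtain ⟨i⟩ := Stmt14.tor_zero 𝔪 a ha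
    rw [Stmt14.moduleLength_eq_of_iso i]
    exact Stmt14.moduleLength_quot_maximal A 𝔪 hm
  | succ n ih =>
    intro a b hab ha hb h1 h2
    obtain ⟨i⟩ := Stmt14.tor_step 𝔪 a b hab ha h1 n
    rw [Stmt14.moduleLength_eq_of_iso i]
    exact ih b a (by rw [mul_comm]; exact hab) hb ha h2 h1

end Auxiliary

/-- With `Q` a regular local ring of dimension `c ≥ 2` with algebraically
closed residue field, `f₁,…,f_{c-1}, g` a `Q`-regular sequence with `f i ∈ 𝔫²` and `g ∈ 𝔫`,
and `A = Q/(f₁,…,f_{c-1}, g^r)` (`r ≥ 2`, presented via the surjection `q`):  for every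
`1 ≤ s ≤ r - 1` and every `l ≥ 0`, `Tor_l^A(A/(g^s A), k)` is a one-dimensional vector space
over the residue field `k = A/𝔫A` of `A`, i.e. it has length one as an `A`-module; so all
Betti numbers of `A/(g^s A)` equal `1`. -/
theorem stmt_14
    (Q : Type) [CommRing Q] [IsLocalRing Q] [IsNoetherianRing Q]
    [IsAlgClosed (IsLocalRing.ResidueField Q)]
    (c : ℕ) (hc : 2 ≤ c)
    (hdim : ringKrullDim Q = c)
    (hregular : ∃ s : Finset Q, s.card = c ∧
      Ideal.span (s : Set Q) = IsLocalRing.maximalIdeal Q)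
    (f : Fin (c - 1) → Q) (g : Q)
    (hf2 : ∀ i, f i ∈ IsLocalRing.maximalIdeal Q ^ 2)
    (hg : g ∈ IsLocalRing.maximalIdeal Q)
    (hfreg : RingTheory.Sequence.IsRegular Q (List.ofFn f ++ [g]))
    (r : ℕ) (hr : 2 ≤ r)
    (A : Type) [CommRing A]
    (q : Q →+* A) (hq : Function.Surjective q)
    (hker : RingHom.ker q = Ideal.span (insert (g ^ r) (Set.range f)))
    (s : ℕ) (hs1 : 1 ≤ s) (hs2 : s ≤ r - 1) (l : ℕ) :
    moduleLength A
      (((Tor (ModuleCat A) l).obj (ModuleCat.of A (A ⧸ Ideal.span {q g ^ s}))).obj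
        (ModuleCat.of A (A ⧸ Ideal.map q (IsLocalRing.maximalIdeal Q)))) = 1 := by
  have hs2' : s ≤ r := by omega
  have hrs1 : 1 ≤ r - s := by omega
  have hrs2 : r - s ≤ r := by omega
  set 𝔪Q := IsLocalRing.maximalIdeal Q with h𝔪Q
  set 𝔪 : Ideal A := Ideal.map q 𝔪Q with h𝔪
  -- the kernel of `q` is contained in the maximal ideal
  have hkerle : RingHom.ker q ≤ 𝔪Q := by
    rw [hker, Ideal.span_le]
    rintro x (rfl | ⟨i, rfl⟩)
    · exact Ideal.pow_mem_of_mem _ hg r (by omega)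
    · exact (Ideal.pow_le_self two_ne_zero) (hf2 i)
  -- `𝔪` is maximal
  have hm : 𝔪.IsMaximal := by
    rcases Ideal.map_eq_top_or_isMaximal_of_surjective q hq
        (IsLocalRing.maximalIdeal.isMaximal Q) with h | h
    · exfalso
      have h1 : Ideal.comap q (Ideal.map q 𝔪Q) = 𝔪Q ⊔ RingHom.ker q :=
        Ideal.comap_map_of_surjective q hq 𝔪Q
      rw [h, Ideal.comap_top, sup_eq_left.mpr hkerle] at h1
      exact (IsLocalRing.maximalIdeal.isMaximal Q).ne_top h1.symm
    · exact h
  -- `g` is regular on `Q / (f)`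
  have hreg : IsSMulRegular (Q ⧸ (Ideal.span (Set.range f) • ⊤ : Submodule Q Q)) g := by
    have h1 := hfreg.toIsWeaklyRegular
    rw [RingTheory.Sequence.isWeaklyRegular_append_iff] at h1
    have h2 := h1.2
    have h3 : Ideal.ofList (List.ofFn f) = Ideal.span (Set.range f) := by
      unfold Ideal.ofList
      congr 1
      ext x
      simp [List.mem_ofFn]
    rw [h3] at h2
    exact (RingTheory.Sequence.isWeaklyRegular_singleton_iff _ _).mp h2
  -- the two annihilator conditions
  have hann1 : ∀ x : A, x * (q g) ^ s = 0 → x ∈ Ideal.span {(q g) ^ (r - s)} :=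
    fun x hx => Stmt14.ann_lemma q hq f g r s hs2' hker hreg x hx
  have hann2 : ∀ x : A, x * (q g) ^ (r - s) = 0 → x ∈ Ideal.span {(q g) ^ s} := by
    intro x hx
    have := Stmt14.ann_lemma q hq f g r (r - s) hrs2 hker hreg x hx
    rwa [show r - (r - s) = s by omega] at this
  -- the product vanishes
  have hab : (q g) ^ s * (q g) ^ (r - s) = 0 := by
    rw [← pow_add, show s + (r - s) = r by omega, ← map_pow]
    have : g ^ r ∈ RingHom.ker q := by
      rw [hker]
      exact Ideal.subset_span (Set.mem_insert _ _)
    rwa [RingHom.mem_ker] at this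
  -- membership in the maximal ideal
  have hqg : q g ∈ 𝔪 := Ideal.mem_map_of_mem q hg
  have ha : (q g) ^ s ∈ 𝔪 := Ideal.pow_mem_of_mem _ hqg s (by omega)
  have hb : (q g) ^ (r - s) ∈ 𝔪 := Ideal.pow_mem_of_mem _ hqg (r - s) (by omega)
  exact Stmt14.tor_length 𝔪 hm l ((q g) ^ s) ((q g) ^ (r - s)) hab ha hb hann1 hann2
end
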